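/- With the tensor product OPB construction A ⊗ A': if A ⊗ A' is reducible, then A is reducible or A' is reducible. -/

import Mathlib

/-- Concrete tensor product of two vectors in Euclidean spaces. -/
noncomputable def tensor2 {ι κ : Type*} [Fintype ι] [Fintype κ]
    (a : EuclideanSpace ℂ ι) (b : EuclideanSpace ℂ κ) :
    EuclideanSpace ℂ (ι × κ) :=
  WithLp.toLp 2 (fun p => a p.1 * b p.2)

/-- Concrete tensor product of an `n`-tuple of vectors in Euclidean spaces. -/
noncomputable def tensorFam {n : ℕ} {ι : Fin n → Type*} [∀ k, Fintype (ι k)]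
    (a : ∀ k, EuclideanSpace ℂ (ι k)) : EuclideanSpace ℂ (∀ k, ι k) :=
  WithLp.toLp 2 (fun f => ∏ k, a k (f k))

lemma inner_tensor2 {ι κ : Type*} [Fintype ι] [Fintype κ]
    (x x' : EuclideanSpace ℂ ι) (y y' : EuclideanSpace ℂ κ) :
    (inner ℂ (tensor2 x y) (tensor2 x' y') : ℂ) = inner ℂ x x' * inner ℂ y y' := by
  simp only [tensor2, PiLp.inner_apply, PiLp.toLp_apply, RCLike.inner_apply, map_mul]
  rw [Fintype.sum_prod_type, Finset.sum_mul_sum]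
  exact Finset.sum_congr rfl fun i _ => Finset.sum_congr rfl fun j _ => by ring

lemma inner_self_one {ι : Type*} [Fintype ι] (x : EuclideanSpace ℂ ι) (h : ‖x‖ = 1) :
    (inner ℂ x x : ℂ) = 1 := by
  rw [inner_self_eq_norm_sq_to_K, h]; norm_num

/-- If the tensor product OPB `A ⊗ A'` (indexed by pairs `(i,j)`, with `k`-th factor
`a_{i,k} ⊗ b_{j,k}`) is reducible, then `A` is reducible or `A'` is reducible. -/
theorem stmt13 (n D D' : ℕ) (d d' : Fin n → ℕ)
    (a : Fin D → ∀ k, EuclideanSpace ℂ (Fin (d k)))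
    (b : Fin D' → ∀ k, EuclideanSpace ℂ (Fin (d' k)))
    (ha : ∀ i k, ‖a i k‖ = 1) (hb : ∀ j k, ‖b j k‖ = 1)
    (haonb : Orthonormal ℂ (fun i => tensorFam (a i)))
    (haspan : Submodule.span ℂ (Set.range fun i => tensorFam (a i)) = ⊤)
    (hbonb : Orthonormal ℂ (fun j => tensorFam (b j)))
    (hbspan : Submodule.span ℂ (Set.range fun j => tensorFam (b j)) = ⊤)
    (hred : ∃ k : Fin n, ∃ S : Set (Fin D × Fin D'), S.Nonempty ∧ Sᶜ.Nonempty ∧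
      ∀ p ∈ S, ∀ q ∈ Sᶜ,
        (inner ℂ (tensor2 (a p.1 k) (b p.2 k)) (tensor2 (a q.1 k) (b q.2 k)) : ℂ) = 0) :
    (∃ k : Fin n, ∃ J : Set (Fin D), J.Nonempty ∧ Jᶜ.Nonempty ∧
        ∀ i ∈ J, ∀ i' ∈ Jᶜ, (inner ℂ (a i k) (a i' k) : ℂ) = 0) ∨
    (∃ k : Fin n, ∃ J : Set (Fin D'), J.Nonempty ∧ Jᶜ.Nonempty ∧
        ∀ j ∈ J, ∀ j' ∈ Jᶜ, (inner ℂ (b j k) (b j' k) : ℂ) = 0) := by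
  obtain ⟨k, S, ⟨p₀, hp₀⟩, ⟨q₀, hq₀⟩, hS⟩ := hred
  have key : ∀ p ∈ S, ∀ q ∈ Sᶜ,
      (inner ℂ (a p.1 k) (a q.1 k) : ℂ) * inner ℂ (b p.2 k) (b q.2 k) = 0 := by
    intro p hp q hq
    have := hS p hp q hq
    rwa [inner_tensor2] at this
  by_cases hcase : ∃ i : Fin D, (∃ j, (i, j) ∈ S) ∧ (∃ j, (i, j) ∈ Sᶜ)
  · obtain ⟨i, ⟨j₁, hj₁⟩, ⟨j₂, hj₂⟩⟩ := hcase
    right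
    refine ⟨k, {j | (i, j) ∈ S}, ⟨j₁, hj₁⟩, ⟨j₂, hj₂⟩, ?_⟩
    intro j hj j' hj'
    have h := key (i, j) hj (i, j') hj'
    simp only at h
    rcases mul_eq_zero.mp h with h | h
    · exact absurd h (by rw [inner_self_one _ (ha i k)]; norm_num)
    · exact h
  · -- each row is all in S or all in Sᶜ
    push_neg at hcase
    left
    refine ⟨k, {i | (i, p₀.2) ∈ S}, ?_, ?_, ?_⟩
    · exact ⟨p₀.1, by simpa using hp₀⟩
    · refine ⟨q₀.1, fun h => ?_⟩
      exact hcase q₀.1 ⟨p₀.2, h⟩ q₀.2 (by simpa using hq₀)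
    · intro i hi i' hi'
      have h := key (i, p₀.2) hi (i', p₀.2) hi'
      simp only at h
      rcases mul_eq_zero.mp h with h | h
      · exact h
      · exact absurd h (by rw [inner_self_one _ (hb p₀.2 k)]; norm_num)
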